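/- Let Δx > 0 and let x_i ∈ ℝ. For l ∈ {i−1, i, i+1}, let I_l denote the interval (x_i + (l − i − 1/2)Δx, x_i + (l − i + 1/2)Δx) of width Δx. Then for any prescribed cell averages a_{i−1}, a_i, a_{i+1} ∈ ℝ and cell-averaged slopes b_{i−1}, b_{i+1} ∈ ℝ, there exists a unique real polynomial p of degree at most 4 satisfying (1/Δx) ∫_{I_l} p(x) dx = a_l for l = i−1, i, i+1 and (1/Δx) ∫_{I_l} p'(x) dx = b_l for l = i−1, i+1. -/

import Mathlib

open MeasureTheory

open Polynomial in
lemma shweno_setIoo_eq (f : ℝ → ℝ) {l r : ℝ} (h : l ≤ r) :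
    ∫ x in Set.Ioo l r, f x = ∫ x in l..r, f x := by
  rw [intervalIntegral.integral_of_le h, MeasureTheory.integral_Ioc_eq_integral_Ioo]

lemma shweno_integ5 (c0 c1 c2 c3 c4 l r : ℝ) :
    (∫ x in l..r, (c0 + c1*x + c2*x^2 + c3*x^3 + c4*x^4))
      = c0*(r-l) + c1*(r^2-l^2)/2 + c2*(r^3-l^3)/3 + c3*(r^4-l^4)/4 + c4*(r^5-l^5)/5 := by
  have key : ∀ x ∈ Set.uIcc l r, HasDerivAt
      (fun x : ℝ => c0*x + c1/2*x^2 + c2/3*x^3 + c3/4*x^4 + c4/5*x^5)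
      (c0 + c1*x + c2*x^2 + c3*x^3 + c4*x^4) x := by
    intro x _
    have h1 : HasDerivAt (fun x : ℝ => c0*x) (c0*1) x := (hasDerivAt_id x).const_mul c0
    have h2 := (hasDerivAt_pow 2 x).const_mul (c1/2)
    have h3 := (hasDerivAt_pow 3 x).const_mul (c2/3)
    have h4 := (hasDerivAt_pow 4 x).const_mul (c3/4)
    have h5 := (hasDerivAt_pow 5 x).const_mul (c4/5)
    exact ((((h1.add h2).add h3).add h4).add h5).congr_deriv (by
      push_cast
      ring)
  rw [intervalIntegral.integral_eq_sub_of_hasDerivAt key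
    ((Continuous.intervalIntegrable (by fun_prop) l r))]
  ring

lemma shweno_integC (c0 c1 c2 c3 c4 xi l r : ℝ) :
    (∫ x in l..r, (c0 + c1*(x-xi) + c2*(x-xi)^2 + c3*(x-xi)^3 + c4*(x-xi)^4))
      = c0*((r-xi)-(l-xi)) + c1*((r-xi)^2-(l-xi)^2)/2 + c2*((r-xi)^3-(l-xi)^3)/3
        + c3*((r-xi)^4-(l-xi)^4)/4 + c4*((r-xi)^5-(l-xi)^5)/5 := by
  have h := intervalIntegral.integral_comp_sub_right
    (a := l) (b := r) (fun y => c0 + c1*y + c2*y^2 + c3*y^3 + c4*y^4) xi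
  exact h.trans (shweno_integ5 c0 c1 c2 c3 c4 (l-xi) (r-xi))

lemma shweno_derivInt (q : Polynomial ℝ) {l r : ℝ} (h : l ≤ r) :
    (∫ x in Set.Ioo l r, (Polynomial.derivative q).eval x) = q.eval r - q.eval l := by
  rw [shweno_setIoo_eq _ h]
  exact intervalIntegral.integral_eq_sub_of_hasDerivAt (fun x _ => q.hasDerivAt x)
    ((q.derivative.continuous_aeval).intervalIntegrable l r)

open Polynomial in
lemma shweno_avgC (c0 c1 c2 c3 c4 xi : ℝ) {l r : ℝ} (h : l ≤ r) :
    (∫ x in Set.Ioo l r,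
        (C c0 + C c1 * (X - C xi) + C c2 * (X - C xi)^2 + C c3 * (X - C xi)^3
          + C c4 * (X - C xi)^4 : Polynomial ℝ).eval x)
      = c0*((r-xi)-(l-xi)) + c1*((r-xi)^2-(l-xi)^2)/2 + c2*((r-xi)^3-(l-xi)^3)/3
        + c3*((r-xi)^4-(l-xi)^4)/4 + c4*((r-xi)^5-(l-xi)^5)/5 := by
  rw [shweno_setIoo_eq _ h]
  have hev : ∀ x : ℝ,
      (C c0 + C c1 * (X - C xi) + C c2 * (X - C xi)^2 + C c3 * (X - C xi)^3
        + C c4 * (X - C xi)^4 : Polynomial ℝ).eval x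
        = c0 + c1*(x-xi) + c2*(x-xi)^2 + c3*(x-xi)^3 + c4*(x-xi)^4 := by
    intro x; simp
  simp only [hev]
  exact shweno_integC c0 c1 c2 c3 c4 xi l r

open Polynomial in
lemma shweno_degC (c0 c1 c2 c3 c4 xi : ℝ) :
    (C c0 + C c1 * (X - C xi) + C c2 * (X - C xi)^2 + C c3 * (X - C xi)^3
      + C c4 * (X - C xi)^4 : Polynomial ℝ).degree ≤ 4 := by
  have hX : ∀ m : ℕ, ((X - C xi : Polynomial ℝ)^m).degree ≤ (m : WithBot ℕ) := by
    intro m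
    apply (Polynomial.degree_pow_le _ _).trans
    calc m • (X - C xi : Polynomial ℝ).degree ≤ m • (1 : WithBot ℕ) :=
          nsmul_le_nsmul_right (Polynomial.degree_X_sub_C_le xi) m
      _ = (m : WithBot ℕ) := by
          induction m with
          | zero => rfl
          | succ k ih => rw [succ_nsmul, ih]; push_cast; ring
  have hm : ∀ (c : ℝ) (m : ℕ), m ≤ 4 → (C c * (X - C xi)^m : Polynomial ℝ).degree ≤ 4 := by
    intro c m hm
    apply (Polynomial.degree_mul_le _ _).trans
    calc (C c : Polynomial ℝ).degree + ((X - C xi : Polynomial ℝ)^m).degree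
        ≤ 0 + (m : WithBot ℕ) := add_le_add Polynomial.degree_C_le (hX m)
      _ = (m : WithBot ℕ) := by rw [zero_add]
      _ ≤ 4 := by exact_mod_cast hm
  have h0 : (C c0 : Polynomial ℝ).degree ≤ 4 := Polynomial.degree_C_le.trans (by norm_num)
  have h1 := hm c1 1 (by norm_num)
  have h2 := hm c2 2 (by norm_num)
  have h3 := hm c3 3 (by norm_num)
  have h4 := hm c4 4 (by norm_num)
  rw [pow_one] at h1
  exact (Polynomial.degree_add_le _ _).trans (sup_le ((Polynomial.degree_add_le _ _).trans
    (sup_le ((Polynomial.degree_add_le _ _).trans (sup_le ((Polynomial.degree_add_le _ _).trans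
      (sup_le h0 h1)) h2)) h3)) h4)

open Polynomial in
set_option maxHeartbeats 1000000 in
lemma shweno_exists (Δx xi : ℝ) (hΔx : 0 < Δx) (a₁ a₂ a₃ b₁ b₃ : ℝ) :
    ∃ q : Polynomial ℝ, q.degree ≤ 4 ∧
      (1 / Δx) * (∫ x in Set.Ioo (xi - (3 / 2) * Δx) (xi - (1 / 2) * Δx), q.eval x) = a₁ ∧
      (1 / Δx) * (∫ x in Set.Ioo (xi - (1 / 2) * Δx) (xi + (1 / 2) * Δx), q.eval x) = a₂ ∧
      (1 / Δx) * (∫ x in Set.Ioo (xi + (1 / 2) * Δx) (xi + (3 / 2) * Δx), q.eval x) = a₃ ∧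
      (1 / Δx) *
        (∫ x in Set.Ioo (xi - (3 / 2) * Δx) (xi - (1 / 2) * Δx),
          (Polynomial.derivative q).eval x) = b₁ ∧
      (1 / Δx) *
        (∫ x in Set.Ioo (xi + (1 / 2) * Δx) (xi + (3 / 2) * Δx),
          (Polynomial.derivative q).eval x) = b₃ := by
  have h0 : Δx ≠ 0 := ne_of_gt hΔx
  have hle1 : xi - (3/2)*Δx ≤ xi - (1/2)*Δx := by nlinarith
  have hle2 : xi - (1/2)*Δx ≤ xi + (1/2)*Δx := by nlinarith
  have hle3 : xi + (1/2)*Δx ≤ xi + (3/2)*Δx := by nlinarith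
  refine ⟨C (((-47)/480)*a₁ + ((287)/240)*a₂ + ((-47)/480)*a₃ + ((-9)/320)*(Δx*b₁) + ((9)/320)*(Δx*b₃)) + C ((((-13)/16)*a₁ + ((13)/16)*a₃ + ((-5)/16)*(Δx*b₁) + ((-5)/16)*(Δx*b₃)) / Δx) * (X - C xi)
      + C ((((5)/4)*a₁ + ((-5)/2)*a₂ + ((5)/4)*a₃ + ((3)/8)*(Δx*b₁) + ((-3)/8)*(Δx*b₃)) / Δx^2) * (X - C xi)^2
      + C ((((1)/4)*a₁ + ((-1)/4)*a₃ + ((1)/4)*(Δx*b₁) + ((1)/4)*(Δx*b₃)) / Δx^3) * (X - C xi)^3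
      + C ((((-1)/2)*a₁ + a₂ + ((-1)/2)*a₃ + ((-1)/4)*(Δx*b₁) + ((1)/4)*(Δx*b₃)) / Δx^4) * (X - C xi)^4, shweno_degC _ _ _ _ _ _, ?_, ?_, ?_, ?_, ?_⟩
  · rw [shweno_avgC _ _ _ _ _ _ hle1]
    field_simp
    ring
  · rw [shweno_avgC _ _ _ _ _ _ hle2]
    field_simp
    ring
  · rw [shweno_avgC _ _ _ _ _ _ hle3]
    field_simp
    ring
  · rw [shweno_derivInt _ hle1]
    simp only [Polynomial.eval_add, Polynomial.eval_mul, Polynomial.eval_pow,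
      Polynomial.eval_sub, Polynomial.eval_C, Polynomial.eval_X]
    field_simp
    ring
  · rw [shweno_derivInt _ hle3]
    simp only [Polynomial.eval_add, Polynomial.eval_mul, Polynomial.eval_pow,
      Polynomial.eval_sub, Polynomial.eval_C, Polynomial.eval_X]
    field_simp
    ring

/-- Existence and uniqueness of the SHWENO quartic: on the uniform stencil
{I_{i−1}, I_i, I_{i+1}} there is a unique polynomial of degree at most 4 whose
cell averages on the three cells and cell-averaged slopes on the two outer
cells take prescribed values. -/
theorem shweno_quartic_exists_unique
    (Δx xi : ℝ) (hΔx : 0 < Δx) (a₁ a₂ a₃ b₁ b₃ : ℝ) :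
    ∃! q : Polynomial ℝ, q.degree ≤ 4 ∧
      (1 / Δx) * (∫ x in Set.Ioo (xi - (3 / 2) * Δx) (xi - (1 / 2) * Δx), q.eval x) = a₁ ∧
      (1 / Δx) * (∫ x in Set.Ioo (xi - (1 / 2) * Δx) (xi + (1 / 2) * Δx), q.eval x) = a₂ ∧
      (1 / Δx) * (∫ x in Set.Ioo (xi + (1 / 2) * Δx) (xi + (3 / 2) * Δx), q.eval x) = a₃ ∧
      (1 / Δx) *
        (∫ x in Set.Ioo (xi - (3 / 2) * Δx) (xi - (1 / 2) * Δx),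
          (Polynomial.derivative q).eval x) = b₁ ∧
      (1 / Δx) *
        (∫ x in Set.Ioo (xi + (1 / 2) * Δx) (xi + (3 / 2) * Δx),
          (Polynomial.derivative q).eval x) = b₃ := by
  have h0 : Δx ≠ 0 := ne_of_gt hΔx
  have hle1 : xi - (3/2)*Δx ≤ xi - (1/2)*Δx := by nlinarith
  have hle2 : xi - (1/2)*Δx ≤ xi + (1/2)*Δx := by nlinarith
  have hle3 : xi + (1/2)*Δx ≤ xi + (3/2)*Δx := by nlinarith
  obtain ⟨q₀, hq₀⟩ := shweno_exists Δx xi hΔx a₁ a₂ a₃ b₁ b₃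
  refine ⟨q₀, hq₀, fun q hq => ?_⟩
  -- reduce the integral constraints to polynomial equations on the coefficients
  have process : ∀ p : Polynomial ℝ, p.degree ≤ 4 →
      (1 / Δx) * (∫ x in Set.Ioo (xi - (3 / 2) * Δx) (xi - (1 / 2) * Δx), p.eval x) = a₁ →
      (1 / Δx) * (∫ x in Set.Ioo (xi - (1 / 2) * Δx) (xi + (1 / 2) * Δx), p.eval x) = a₂ →
      (1 / Δx) * (∫ x in Set.Ioo (xi + (1 / 2) * Δx) (xi + (3 / 2) * Δx), p.eval x) = a₃ →
      (1 / Δx) * (∫ x in Set.Ioo (xi - (3 / 2) * Δx) (xi - (1 / 2) * Δx),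
          (Polynomial.derivative p).eval x) = b₁ →
      (1 / Δx) * (∫ x in Set.Ioo (xi + (1 / 2) * Δx) (xi + (3 / 2) * Δx),
          (Polynomial.derivative p).eval x) = b₃ →
      (p.coeff 0*((xi - (1/2)*Δx)-(xi - (3/2)*Δx))
        + p.coeff 1*((xi - (1/2)*Δx)^2-(xi - (3/2)*Δx)^2)/2
        + p.coeff 2*((xi - (1/2)*Δx)^3-(xi - (3/2)*Δx)^3)/3
        + p.coeff 3*((xi - (1/2)*Δx)^4-(xi - (3/2)*Δx)^4)/4
        + p.coeff 4*((xi - (1/2)*Δx)^5-(xi - (3/2)*Δx)^5)/5 = a₁ * Δx) ∧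
      (p.coeff 0*((xi + (1/2)*Δx)-(xi - (1/2)*Δx))
        + p.coeff 1*((xi + (1/2)*Δx)^2-(xi - (1/2)*Δx)^2)/2
        + p.coeff 2*((xi + (1/2)*Δx)^3-(xi - (1/2)*Δx)^3)/3
        + p.coeff 3*((xi + (1/2)*Δx)^4-(xi - (1/2)*Δx)^4)/4
        + p.coeff 4*((xi + (1/2)*Δx)^5-(xi - (1/2)*Δx)^5)/5 = a₂ * Δx) ∧
      (p.coeff 0*((xi + (3/2)*Δx)-(xi + (1/2)*Δx))
        + p.coeff 1*((xi + (3/2)*Δx)^2-(xi + (1/2)*Δx)^2)/2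
        + p.coeff 2*((xi + (3/2)*Δx)^3-(xi + (1/2)*Δx)^3)/3
        + p.coeff 3*((xi + (3/2)*Δx)^4-(xi + (1/2)*Δx)^4)/4
        + p.coeff 4*((xi + (3/2)*Δx)^5-(xi + (1/2)*Δx)^5)/5 = a₃ * Δx) ∧
      ((p.coeff 0 + p.coeff 1*(xi - (1/2)*Δx) + p.coeff 2*(xi - (1/2)*Δx)^2
          + p.coeff 3*(xi - (1/2)*Δx)^3 + p.coeff 4*(xi - (1/2)*Δx)^4)
        - (p.coeff 0 + p.coeff 1*(xi - (3/2)*Δx) + p.coeff 2*(xi - (3/2)*Δx)^2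
          + p.coeff 3*(xi - (3/2)*Δx)^3 + p.coeff 4*(xi - (3/2)*Δx)^4) = b₁ * Δx) ∧
      ((p.coeff 0 + p.coeff 1*(xi + (3/2)*Δx) + p.coeff 2*(xi + (3/2)*Δx)^2
          + p.coeff 3*(xi + (3/2)*Δx)^3 + p.coeff 4*(xi + (3/2)*Δx)^4)
        - (p.coeff 0 + p.coeff 1*(xi + (1/2)*Δx) + p.coeff 2*(xi + (1/2)*Δx)^2
          + p.coeff 3*(xi + (1/2)*Δx)^3 + p.coeff 4*(xi + (1/2)*Δx)^4) = b₃ * Δx) := by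
    intro p hdeg H1 H2 H3 H4 H5
    have hnd : p.natDegree < 5 := by
      have h4 : p.natDegree ≤ 4 := Polynomial.natDegree_le_iff_degree_le.mpr (by exact_mod_cast hdeg)
      omega
    have hev : ∀ x : ℝ, p.eval x
        = p.coeff 0 + p.coeff 1*x + p.coeff 2*x^2 + p.coeff 3*x^3 + p.coeff 4*x^4 := by
      intro x
      rw [Polynomial.eval_eq_sum_range' hnd, Finset.sum_range_succ, Finset.sum_range_succ,
        Finset.sum_range_succ, Finset.sum_range_succ, Finset.sum_range_one]
      ring
    rw [shweno_setIoo_eq _ hle1] at H1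
    rw [shweno_setIoo_eq _ hle2] at H2
    rw [shweno_setIoo_eq _ hle3] at H3
    simp only [hev] at H1 H2 H3
    rw [shweno_integ5, one_div_mul_eq_div, div_eq_iff h0] at H1 H2 H3
    rw [shweno_derivInt _ hle1] at H4
    rw [shweno_derivInt _ hle3] at H5
    simp only [hev] at H4 H5
    rw [one_div_mul_eq_div, div_eq_iff h0] at H4 H5
    exact ⟨H1, H2, H3, H4, H5⟩
  obtain ⟨hdq, h1, h2, h3, h4, h5⟩ := hq
  obtain ⟨hdq₀, g1, g2, g3, g4, g5⟩ := hq₀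
  obtain ⟨E1, E2, E3, E4, E5⟩ := process q hdq h1 h2 h3 h4 h5
  obtain ⟨F1, F2, F3, F4, F5⟩ := process q₀ hdq₀ g1 g2 g3 g4 g5
  have h5ne : (Δx : ℝ)^5 ≠ 0 := pow_ne_zero _ h0
  ext n
  match n with
  | 0 => exact mul_left_cancel₀ h5ne (by
      linear_combination (((-47)/480)*Δx^4 + ((-13)/16)*(-xi)*Δx^3 + ((5)/4)*(-xi)^2*Δx^2 + ((1)/4)*(-xi)^3*Δx + ((-1)/2)*(-xi)^4)*E1 - (((-47)/480)*Δx^4 + ((-13)/16)*(-xi)*Δx^3 + ((5)/4)*(-xi)^2*Δx^2 + ((1)/4)*(-xi)^3*Δx + ((-1)/2)*(-xi)^4)*F1 + (((287)/240)*Δx^4 + ((-5)/2)*(-xi)^2*Δx^2 + (1)*(-xi)^4)*E2 - (((287)/240)*Δx^4 + ((-5)/2)*(-xi)^2*Δx^2 + (1)*(-xi)^4)*F2 + (((-47)/480)*Δx^4 + ((13)/16)*(-xi)*Δx^3 + ((5)/4)*(-xi)^2*Δx^2 + ((-1)/4)*(-xi)^3*Δx + ((-1)/2)*(-xi)^4)*E3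 - (((-47)/480)*Δx^4 + ((13)/16)*(-xi)*Δx^3 + ((5)/4)*(-xi)^2*Δx^2 + ((-1)/4)*(-xi)^3*Δx + ((-1)/2)*(-xi)^4)*F3 + (((-9)/320)*Δx^5 + ((-5)/16)*(-xi)*Δx^4 + ((3)/8)*(-xi)^2*Δx^3 + ((1)/4)*(-xi)^3*Δx^2 + ((-1)/4)*(-xi)^4*Δx)*E4 - (((-9)/320)*Δx^5 + ((-5)/16)*(-xi)*Δx^4 + ((3)/8)*(-xi)^2*Δx^3 + ((1)/4)*(-xi)^3*Δx^2 + ((-1)/4)*(-xi)^4*Δx)*F4 + (((9)/320)*Δx^5 + ((-5)/16)*(-xi)*Δx^4 + ((-3)/8)*(-xi)^2*Δx^3 + ((1)/4)*(-xi)^3*Δx^2 + ((1)/4)*(-xi)^4*Δx)*E5 - (((9)/320)*Δx^5 + ((-5)/16)*(-xi)*Δx^4 + ((-3)/8)*(-xi)^2*Δx^3 + ((1)/4)*(-xi)^3*Δx^2 + ((1)/4)*(-xi)^4*Δx)*F5)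
  | 1 => exact mul_left_cancel₀ h5ne (by
      linear_combination (((-13)/16)*Δx^3 + ((5)/2)*(-xi)*Δx^2 + ((3)/4)*(-xi)^2*Δx + (-2)*(-xi)^3)*E1 - (((-13)/16)*Δx^3 + ((5)/2)*(-xi)*Δx^2 + ((3)/4)*(-xi)^2*Δx + (-2)*(-xi)^3)*F1 + ((-5)*(-xi)*Δx^2 + (4)*(-xi)^3)*E2 - ((-5)*(-xi)*Δx^2 + (4)*(-xi)^3)*F2 + (((13)/16)*Δx^3 + ((5)/2)*(-xi)*Δx^2 + ((-3)/4)*(-xi)^2*Δx + (-2)*(-xi)^3)*E3 - (((13)/16)*Δx^3 + ((5)/2)*(-xi)*Δx^2 + ((-3)/4)*(-xi)^2*Δx + (-2)*(-xi)^3)*F3 + (((-5)/16)*Δx^4 + ((3)/4)*(-xi)*Δx^3 + ((3)/4)*(-xi)^2*Δx^2 + (-1)*(-xi)^3*Δx)*E4 - (((-5)/16)*Δx^4 + ((3)/4)*(-xi)*Δx^3 + ((3)/4)*(-xi)^2*Δx^2 + (-1)*(-xi)^3*Δx)*F4 + (((-5)/16)*Δx^4 + ((-3)/4)*(-xi)*Δx^3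 + ((3)/4)*(-xi)^2*Δx^2 + (1)*(-xi)^3*Δx)*E5 - (((-5)/16)*Δx^4 + ((-3)/4)*(-xi)*Δx^3 + ((3)/4)*(-xi)^2*Δx^2 + (1)*(-xi)^3*Δx)*F5)
  | 2 => exact mul_left_cancel₀ h5ne (by
      linear_combination (((5)/4)*Δx^2 + ((3)/4)*(-xi)*Δx + (-3)*(-xi)^2)*E1 - (((5)/4)*Δx^2 + ((3)/4)*(-xi)*Δx + (-3)*(-xi)^2)*F1 + (((-5)/2)*Δx^2 + (6)*(-xi)^2)*E2 - (((-5)/2)*Δx^2 + (6)*(-xi)^2)*F2 + (((5)/4)*Δx^2 + ((-3)/4)*(-xi)*Δx + (-3)*(-xi)^2)*E3 - (((5)/4)*Δx^2 + ((-3)/4)*(-xi)*Δx + (-3)*(-xi)^2)*F3 + (((3)/8)*Δx^3 + ((3)/4)*(-xi)*Δx^2 + ((-3)/2)*(-xi)^2*Δx)*E4 - (((3)/8)*Δx^3 + ((3)/4)*(-xi)*Δx^2 + ((-3)/2)*(-xi)^2*Δx)*F4 + (((-3)/8)*Δx^3 + ((3)/4)*(-xi)*Δx^2 + ((3)/2)*(-xi)^2*Δx)*E5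 - (((-3)/8)*Δx^3 + ((3)/4)*(-xi)*Δx^2 + ((3)/2)*(-xi)^2*Δx)*F5)
  | 3 => exact mul_left_cancel₀ h5ne (by
      linear_combination (((1)/4)*Δx + (-2)*(-xi))*E1 - (((1)/4)*Δx + (-2)*(-xi))*F1 + ((4)*(-xi))*E2 - ((4)*(-xi))*F2 + (((-1)/4)*Δx + (-2)*(-xi))*E3 - (((-1)/4)*Δx + (-2)*(-xi))*F3 + (((1)/4)*Δx^2 + (-1)*(-xi)*Δx)*E4 - (((1)/4)*Δx^2 + (-1)*(-xi)*Δx)*F4 + (((1)/4)*Δx^2 + (1)*(-xi)*Δx)*E5 - (((1)/4)*Δx^2 + (1)*(-xi)*Δx)*F5)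
  | 4 => exact mul_left_cancel₀ h5ne (by
      linear_combination (((-1)/2))*E1 - (((-1)/2))*F1 + ((1))*E2 - ((1))*F2 + (((-1)/2))*E3 - (((-1)/2))*F3 + (((-1)/4)*Δx)*E4 - (((-1)/4)*Δx)*F4 + (((1)/4)*Δx)*E5 - (((1)/4)*Δx)*F5)
  | (n+5) =>
    rw [Polynomial.coeff_eq_zero_of_degree_lt, Polynomial.coeff_eq_zero_of_degree_lt]
    · exact lt_of_le_of_lt hdq₀ (by exact_mod_cast (by omega : (4:ℕ) < n+5))
    · exact lt_of_le_of_lt hdq (by exact_mod_cast (by omega : (4:ℕ) < n+5))
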